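/- Let k ≥ 3 be odd. Let v₀, v₁, v₂ ∈ ℝ² be affinely independent points and let K be their convex hull. Let λ : ℝ² → ℝ be the unique affine map with λ(v₁) = 1 and λ(v₀) = λ(v₂) = 0 (the barycentric coordinate of v₁). Then for every bivariate real polynomial p of total degree at most k − 2, ∫_K P_k(1 − 2·λ(x)) · p(x) dx = 0, where the integral is with respect to the two-dimensional Lebesgue measure. -/

import Mathlib

open MeasureTheory Polynomial

/-- The Legendre polynomial of degree `n`, defined via the Rodrigues formula
`P_n(t) = (1/(2^n · n!)) · (d/dt)^n (t² − 1)^n`. -/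
noncomputable def legendre (n : ℕ) : Polynomial ℝ :=
  ((1 : ℝ) / (2 ^ n * n.factorial)) • (⇑(derivative (R := ℝ)))^[n] ((X ^ 2 - 1) ^ n)

private lemma eval_iter_deriv_zero {k j : ℕ} (hj : j < k) {a : ℝ} (ha : a ^ 2 - 1 = 0) :
    (derivative^[j] ((X ^ 2 - 1 : ℝ[X]) ^ k)).eval a = 0 := by
  obtain ⟨q, hq⟩ := Polynomial.pow_sub_dvd_iterate_derivative_pow (X ^ 2 - 1 : ℝ[X]) k j
  rw [hq, eval_mul, eval_pow]
  have h1 : (X ^ 2 - 1 : ℝ[X]).eval a = 0 := by simpa using ha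
  rw [h1, zero_pow (by omega), zero_mul]

private lemma poly_ibp (g h : ℝ[X]) (hg1 : g.eval 1 = 0) (hg2 : g.eval (-1) = 0) :
    ∫ x in (-1:ℝ)..1, (derivative g).eval x * h.eval x
      = - ∫ x in (-1:ℝ)..1, g.eval x * (derivative h).eval x := by
  have key := intervalIntegral.integral_deriv_mul_eq_sub (a := (-1:ℝ)) (b := 1)
    (u := fun x => g.eval x) (v := fun x => h.eval x)
    (u' := fun x => (derivative g).eval x) (v' := fun x => (derivative h).eval x)
    (fun x _ => g.hasDerivAt x) (fun x _ => h.hasDerivAt x)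
    ((derivative g).continuous.intervalIntegrable _ _)
    ((derivative h).continuous.intervalIntegrable _ _)
  rw [intervalIntegral.integral_add (f := fun x => (derivative g).eval x * h.eval x)
      (g := fun x => g.eval x * (derivative h).eval x)
      (((derivative g).continuous.mul h.continuous).intervalIntegrable _ _)
      ((g.continuous.mul (derivative h).continuous).intervalIntegrable _ _)] at key
  rw [hg1, hg2] at key
  linarith

private lemma legendre_orthogonal {k : ℕ} (r : ℝ[X]) (hr : r.natDegree < k) :
    ∫ x in (-1:ℝ)..1, (legendre k).eval x * r.eval x = 0 := by
  have key : ∀ m, m ≤ k →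
      ∫ x in (-1:ℝ)..1,
        (derivative^[m] ((X ^ 2 - 1 : ℝ[X]) ^ k)).eval x * (derivative^[k - m] r).eval x = 0 := by
    intro m
    induction m with
    | zero =>
      intro _
      have h0 : derivative^[k] r = 0 :=
        Polynomial.iterate_derivative_eq_zero (by simpa using hr)
      simp [h0]
    | succ m ih =>
      intro hm
      have hmk : m < k := hm
      have h1 : derivative^[m+1] ((X ^ 2 - 1 : ℝ[X]) ^ k)
          = derivative (derivative^[m] ((X ^ 2 - 1 : ℝ[X]) ^ k)) :=
        Function.iterate_succ_apply' _ _ _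
      have h2 : derivative^[k - m] r = derivative (derivative^[k - (m+1)] r) := by
        rw [← Function.iterate_succ_apply' derivative]
        congr 1
        omega
      rw [h1, poly_ibp _ _ (eval_iter_deriv_zero hmk (by norm_num))
        (eval_iter_deriv_zero hmk (by norm_num)), ← h2, ih hmk.le, neg_zero]
  have hk := key k le_rfl
  simp only [Nat.sub_self, Function.iterate_zero, id] at hk
  have hev : ∀ x : ℝ, (legendre k).eval x
      = (1 / (2 ^ k * (k.factorial : ℝ))) * (derivative^[k] ((X ^ 2 - 1 : ℝ[X]) ^ k)).eval x := by
    intro x; simp [legendre]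
  simp_rw [hev, mul_assoc]
  rw [intervalIntegral.integral_const_mul, hk, mul_zero]

private noncomputable def e₀ : Fin 2 → ℝ := Pi.single 0 1
private noncomputable def e₁ : Fin 2 → ℝ := Pi.single 1 1

private lemma tset_eq :
    convexHull ℝ {(0 : Fin 2 → ℝ), e₀, e₁}
      = {y : Fin 2 → ℝ | 0 ≤ y 0 ∧ 0 ≤ y 1 ∧ y 0 + y 1 ≤ 1} := by
  apply le_antisymm
  · apply convexHull_min
    · rintro y (rfl | rfl | rfl) <;>
        simp [e₀, e₁, Set.mem_setOf_eq, Pi.single_apply] <;> norm_num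
    · rintro x ⟨hx0, hx1, hx2⟩ y ⟨hy0, hy1, hy2⟩ a b ha hb hab
      refine ⟨?_, ?_, ?_⟩ <;>
        simp only [Pi.add_apply, Pi.smul_apply, smul_eq_mul] <;> nlinarith
  · rintro y ⟨h0, h1, h2⟩
    have hmem := (convex_convexHull ℝ {(0 : Fin 2 → ℝ), e₀, e₁}).sum_mem
      (t := Finset.univ) (w := ![1 - y 0 - y 1, y 0, y 1])
      (z := ![0, e₀, e₁])
      (fun i _ => by fin_cases i <;> simp <;> linarith)
      (by simp [Fin.sum_univ_three]; ring)
      (fun i _ => by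
        fin_cases i <;> refine subset_convexHull ℝ _ ?_ <;> simp)
    have hsum : ∑ i : Fin 3, (![1 - y 0 - y 1, y 0, y 1]) i • (![0, e₀, e₁] : Fin 3 → Fin 2 → ℝ) i = y := by
      funext j
      fin_cases j <;>
        simp [Fin.sum_univ_three, e₀, e₁, Pi.single_apply] <;> ring
    rwa [hsum] at hmem

private lemma mono_orth {k : ℕ} (hk : 3 ≤ k) {a b : ℕ} (hab : a + b ≤ k - 2) (c : ℝ) :
    ∫ y in {y : Fin 2 → ℝ | 0 ≤ y 0 ∧ 0 ≤ y 1 ∧ y 0 + y 1 ≤ 1},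
      (legendre k).eval (1 - 2 * y 0) * (c * (y 0 ^ a * y 1 ^ b)) = 0 := by
  set F' : ℝ × ℝ → ℝ := fun z => (legendre k).eval (1 - 2 * z.1) * (c * (z.1 ^ a * z.2 ^ b))
    with hF'
  set T' : Set (ℝ × ℝ) := {z | 0 ≤ z.1 ∧ 0 ≤ z.2 ∧ z.1 + z.2 ≤ 1} with hT'
  have hT'closed : IsClosed T' := by
    refine IsClosed.inter (isClosed_le continuous_const continuous_fst) ?_
    exact IsClosed.inter (isClosed_le continuous_const continuous_snd)
      (isClosed_le (continuous_fst.add continuous_snd) continuous_const)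
  have hT'c : IsCompact T' := by
    refine IsCompact.of_isClosed_subset (isCompact_Icc (a := ((0:ℝ),(0:ℝ))) (b := (1,1)))
      hT'closed ?_
    rintro ⟨t, s⟩ ⟨h1', h2', h3'⟩
    exact ⟨⟨h1', h2'⟩, ⟨by dsimp at *; linarith, by dsimp at *; linarith⟩⟩
  have hT'm : MeasurableSet T' := hT'closed.measurableSet
  have hF'c : Continuous F' := by
    apply Continuous.mul
    · exact (legendre k).continuous.comp (by continuity)
    · continuity
  have hInt : Integrable (T'.indicator F') volume :=
    (hF'c.continuousOn.integrableOn_compact hT'c).integrable_indicator hT'm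
  -- the set in Fin 2 → ℝ
  set Ts : Set (Fin 2 → ℝ) := {y : Fin 2 → ℝ | 0 ≤ y 0 ∧ 0 ≤ y 1 ∧ y 0 + y 1 ≤ 1} with hTs
  have hTsm : MeasurableSet Ts := by
    have h1 : MeasurableSet {y : Fin 2 → ℝ | 0 ≤ y 0} :=
      measurableSet_le measurable_const (measurable_pi_apply 0)
    have h2 : MeasurableSet {y : Fin 2 → ℝ | 0 ≤ y 1} :=
      measurableSet_le measurable_const (measurable_pi_apply 1)
    have h3 : MeasurableSet {y : Fin 2 → ℝ | y 0 + y 1 ≤ 1} :=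
      measurableSet_le ((measurable_pi_apply 0).add (measurable_pi_apply 1)) measurable_const
    exact h1.inter (h2.inter h3)
  set F : (Fin 2 → ℝ) → ℝ := fun y => (legendre k).eval (1 - 2 * y 0) * (c * (y 0 ^ a * y 1 ^ b))
    with hF
  have step1 : ∫ y in Ts, F y = ∫ y, Ts.indicator F y := (integral_indicator hTsm).symm
  have step2 : ∀ y : Fin 2 → ℝ, Ts.indicator F y
      = T'.indicator F' (MeasurableEquiv.finTwoArrow y) := by
    intro y
    have hmem : y ∈ Ts ↔ (MeasurableEquiv.finTwoArrow y) ∈ T' := by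
      simp [hTs, hT', MeasurableEquiv.finTwoArrow]
    by_cases hy : y ∈ Ts
    · rw [Set.indicator_of_mem hy, Set.indicator_of_mem (hmem.1 hy)]
      simp [hF, hF', MeasurableEquiv.finTwoArrow]
    · rw [Set.indicator_of_notMem hy, Set.indicator_of_notMem (fun h => hy (hmem.2 h))]
  have step3 : ∫ y, Ts.indicator F y = ∫ z, T'.indicator F' z := by
    simp_rw [step2]
    exact (volume_preserving_finTwoArrow ℝ).integral_comp
      (MeasurableEquiv.measurableEmbedding _) _
  rw [step1, step3]
  rw [show (volume : Measure (ℝ × ℝ)) = (volume : Measure ℝ).prod volume from Measure.volume_eq_prod ℝ ℝ]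
  rw [MeasureTheory.integral_prod _ (by rwa [← Measure.volume_eq_prod])]
  -- inner integral
  have inner : ∀ t : ℝ, (∫ s : ℝ, T'.indicator F' (t, s))
      = Set.indicator (Set.Icc (0:ℝ) 1)
          (fun t => (legendre k).eval (1 - 2 * t) * (c * (t ^ a * ((1 - t) ^ (b+1) / (b+1))))) t := by
    intro t
    by_cases ht : t ∈ Set.Icc (0:ℝ) 1
    · rw [Set.indicator_of_mem ht]
      obtain ⟨ht0, ht1⟩ := ht
      have hs : ∀ s : ℝ, T'.indicator F' (t, s)
          = (Set.Icc (0:ℝ) (1 - t)).indicator (fun s => F' (t, s)) s := by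
        intro s
        by_cases hs' : s ∈ Set.Icc (0:ℝ) (1 - t)
        · rw [Set.indicator_of_mem hs', Set.indicator_of_mem]
          exact ⟨ht0, hs'.1, by have := hs'.2; dsimp; linarith⟩
        · rw [Set.indicator_of_notMem hs', Set.indicator_of_notMem]
          rintro ⟨h1', h2', h3'⟩
          exact hs' ⟨h2', by dsimp at h3'; linarith⟩
      simp_rw [hs]
      rw [integral_indicator measurableSet_Icc,
          MeasureTheory.integral_Icc_eq_integral_Ioc,
          ← intervalIntegral.integral_of_le (by linarith : (0:ℝ) ≤ 1 - t)]
      have hfs : ∀ s : ℝ, F' (t, s)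
          = ((legendre k).eval (1 - 2 * t) * (c * t ^ a)) * s ^ b := by
        intro s; simp [hF']; ring
      simp_rw [hfs]
      rw [intervalIntegral.integral_const_mul, integral_pow]
      simp only [zero_pow (Nat.succ_ne_zero b)]
      push_cast
      ring
    · rw [Set.indicator_of_notMem ht]
      have hz : ∀ s : ℝ, T'.indicator F' (t, s) = 0 := by
        intro s
        apply Set.indicator_of_notMem
        rintro ⟨h1', h2', h3'⟩
        simp only [Set.mem_Icc, not_and_or, not_le] at ht
        dsimp at h1' h2' h3'
        rcases ht with ht | ht <;> linarith
      simp_rw [hz]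
      simp
  simp_rw [inner]
  rw [integral_indicator measurableSet_Icc, MeasureTheory.integral_Icc_eq_integral_Ioc,
      ← intervalIntegral.integral_of_le (zero_le_one)]
  -- now a 1-d polynomial integral
  set r : ℝ[X] := C (c / (b+1)) * (C (2⁻¹ : ℝ) * (1 - X)) ^ a * (C (2⁻¹ : ℝ) * (1 + X)) ^ (b+1)
    with hrdef
  have hrd : r.natDegree < k := by
    have hA : ((C (2⁻¹ : ℝ)) * (1 - X)).natDegree ≤ 1 := by
      refine le_trans (natDegree_mul_le) ?_
      simp only [natDegree_C, zero_add]
      exact le_trans (natDegree_sub_le _ _) (by simp)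
    have hB : ((C (2⁻¹ : ℝ)) * (1 + X)).natDegree ≤ 1 := by
      refine le_trans (natDegree_mul_le) ?_
      simp only [natDegree_C, zero_add]
      exact le_trans (natDegree_add_le _ _) (by simp)
    have h1 : r.natDegree ≤ 0 + a * 1 + (b+1) * 1 := by
      refine le_trans (natDegree_mul_le) (add_le_add ?_ ?_)
      · refine le_trans (natDegree_mul_le) (add_le_add (by simp) ?_)
        exact le_trans (natDegree_pow_le) (Nat.mul_le_mul_left a hA)
      · exact le_trans (natDegree_pow_le) (Nat.mul_le_mul_left (b+1) hB)
    omega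
  have hptw : ∀ t : ℝ, (legendre k).eval (1 - 2 * t) * (c * (t ^ a * ((1 - t) ^ (b+1) / (b+1))))
      = (fun u => ((legendre k) * r).eval u) ((-2) * t + 1) := by
    intro t
    have h12 : (1 - 2 * t : ℝ) = (-2) * t + 1 := by ring
    dsimp only
    rw [eval_mul, h12]
    have e1 : ((2:ℝ)⁻¹ * (1 - ((-2) * t + 1))) = t := by ring
    have e2 : ((2:ℝ)⁻¹ * (1 + ((-2) * t + 1))) = 1 - t := by ring
    simp only [hrdef, eval_mul, eval_pow, eval_add, eval_sub, eval_one, eval_C, eval_X, e1, e2]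
    ring
  simp_rw [hptw]
  rw [intervalIntegral.integral_comp_mul_add (fun u => ((legendre k) * r).eval u)
      (by norm_num : (-2:ℝ) ≠ 0) 1]
  have : ∫ u in ((-2:ℝ) * 0 + 1)..((-2:ℝ) * 1 + 1), ((legendre k) * r).eval u = 0 := by
    have h0 : ((-2:ℝ) * 0 + 1) = 1 := by norm_num
    have h1 : ((-2:ℝ) * 1 + 1) = -1 := by norm_num
    rw [h0, h1, intervalIntegral.integral_symm]
    simp_rw [eval_mul]
    rw [legendre_orthogonal r hrd, neg_zero]
  rw [this, smul_zero]

private lemma tdeg_subst {subst : Fin 2 → MvPolynomial (Fin 2) ℝ}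
    (hs : ∀ i, (subst i).totalDegree ≤ 1) (p : MvPolynomial (Fin 2) ℝ) :
    (MvPolynomial.eval₂ MvPolynomial.C subst p).totalDegree ≤ p.totalDegree := by
  rw [MvPolynomial.eval₂_eq]
  refine le_trans (MvPolynomial.totalDegree_finset_sum _ _) (Finset.sup_le fun d hd => ?_)
  refine le_trans (MvPolynomial.totalDegree_mul _ _) ?_
  rw [MvPolynomial.totalDegree_C, zero_add]
  refine le_trans (MvPolynomial.totalDegree_finset_prod _ _) ?_
  refine le_trans (Finset.sum_le_sum fun i _ => le_trans (MvPolynomial.totalDegree_pow _ _)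
    (Nat.mul_le_mul_left (d i) (hs i))) ?_
  simp only [mul_one]
  calc ∑ i ∈ d.support, d i = d.sum fun _ e => e := rfl
    _ ≤ p.totalDegree := MvPolynomial.le_totalDegree hd

private lemma ref_orth {k : ℕ} (hk : 3 ≤ k) (q : MvPolynomial (Fin 2) ℝ)
    (hq : q.totalDegree ≤ k - 2) :
    ∫ y in {y : Fin 2 → ℝ | 0 ≤ y 0 ∧ 0 ≤ y 1 ∧ y 0 + y 1 ≤ 1},
      (legendre k).eval (1 - 2 * y 0) * MvPolynomial.eval y q = 0 := by
  have hTc : IsCompact {y : Fin 2 → ℝ | 0 ≤ y 0 ∧ 0 ≤ y 1 ∧ y 0 + y 1 ≤ 1} := by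
    rw [← tset_eq]
    exact (Set.toFinite _).isCompact_convexHull ℝ
  have hdeg : ∀ d ∈ q.support, d 0 + d 1 ≤ k - 2 := by
    intro d hd
    have h1 := MvPolynomial.le_totalDegree hd
    have h2 : (d.sum fun _ e => e) = d 0 + d 1 := by
      rw [Finsupp.sum_fintype _ _ (fun _ => rfl), Fin.sum_univ_two]
    omega
  have hrw : ∀ y : Fin 2 → ℝ, MvPolynomial.eval y q
      = ∑ d ∈ q.support, (q.coeff d) * (y 0 ^ d 0 * y 1 ^ d 1) := by
    intro y
    conv_lhs => rw [← q.support_sum_monomial_coeff]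
    rw [map_sum]
    refine Finset.sum_congr rfl fun d _ => ?_
    rw [MvPolynomial.eval_monomial, Finsupp.prod_fintype _ _ (fun i => pow_zero _),
      Fin.prod_univ_two]
  simp_rw [hrw, Finset.mul_sum]
  rw [MeasureTheory.integral_finset_sum]
  · exact Finset.sum_eq_zero fun d hd => mono_orth hk (hdeg d hd) _
  · intro d _
    apply ContinuousOn.integrableOn_compact hTc
    apply Continuous.continuousOn
    apply Continuous.mul
    · exact (legendre k).continuous.comp
        (continuous_const.sub (continuous_const.mul (continuous_apply 0)))
    · exact continuous_const.mul (((continuous_apply 0).pow _).mul ((continuous_apply 1).pow _))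

/-- Volume-orthogonality of the non-conforming Crouzeix–Raviart edge basis function:
for odd `k ≥ 3`, a triangle `K` with vertices `v₀, v₁, v₂` and `λ` the barycentric
coordinate of `v₁`, the function `x ↦ P_k(1 − 2·λ(x))` is `L²(K)`-orthogonal to all
bivariate polynomials of total degree at most `k − 2`. -/
theorem stmt_2 (k : ℕ) (hk : 3 ≤ k) (hodd : Odd k)
    (v₀ v₁ v₂ : Fin 2 → ℝ) (hind : AffineIndependent ℝ ![v₀, v₁, v₂])
    (lam : (Fin 2 → ℝ) →ᵃ[ℝ] ℝ)
    (hlam₁ : lam v₁ = 1) (hlam₀ : lam v₀ = 0) (hlam₂ : lam v₂ = 0)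
    (p : MvPolynomial (Fin 2) ℝ) (hp : p.totalDegree ≤ k - 2) :
    ∫ x in convexHull ℝ {v₀, v₁, v₂},
        (legendre k).eval (1 - 2 * lam x) * MvPolynomial.eval x p = 0 := by
  classical
  set u : Fin 2 → ℝ := v₁ - v₀ with hu
  set w : Fin 2 → ℝ := v₂ - v₀ with hw
  set M : Matrix (Fin 2) (Fin 2) ℝ := (Matrix.of ![u, w]).transpose with hM
  have hMapp : ∀ v : Fin 2 → ℝ, ∀ i, M.mulVec v i = v 0 * u i + v 1 * w i := by
    intro v i
    rw [hM]
    simp only [Matrix.mulVec, dotProduct, Fin.sum_univ_two, Matrix.transpose_apply,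
      Matrix.of_apply, Matrix.cons_val_zero, Matrix.cons_val_one, Matrix.head_cons]
    ring
  have hdet : M.det ≠ 0 := by
    intro h0
    obtain ⟨v, hv0, hv⟩ := (Matrix.exists_mulVec_eq_zero_iff).2 h0
    have hcomb : v 0 • u + v 1 • w = 0 := by
      funext i
      have h := congrFun hv i
      rw [hMapp] at h
      simp only [Pi.add_apply, Pi.smul_apply, smul_eq_mul, Pi.zero_apply]
      simpa using h
    have hzero := affineIndependent_iff.1 hind Finset.univ ![-(v 0) - v 1, v 0, v 1]
      (by
        simp only [Fin.sum_univ_three, Matrix.cons_val_zero, Matrix.cons_val_one,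
          Matrix.head_cons, Matrix.cons_val_two, Matrix.tail_cons]
        ring)
      (by
        rw [Fin.sum_univ_three]
        funext i
        have h2 := congrFun hcomb i
        simp only [Matrix.cons_val_zero, Matrix.cons_val_one, Matrix.head_cons,
          Matrix.cons_val_two, Matrix.tail_cons, Pi.add_apply, Pi.smul_apply,
          smul_eq_mul, Pi.zero_apply, hu, hw, Pi.sub_apply] at h2 ⊢
        linarith)
    have h1 : v 0 = 0 := by simpa using hzero 1 (Finset.mem_univ _)
    have h2 : v 1 = 0 := by simpa using hzero 2 (Finset.mem_univ _)
    apply hv0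
    funext i
    fin_cases i
    · exact h1
    · exact h2
  set A : (Fin 2 → ℝ) →ₗ[ℝ] (Fin 2 → ℝ) := Matrix.toLin' M with hA
  have hAdet : LinearMap.det A ≠ 0 := by rwa [hA, LinearMap.det_toLin']
  have hAapp : ∀ y : Fin 2 → ℝ, A y = y 0 • u + y 1 • w := by
    intro y
    funext i
    rw [hA]
    show M.mulVec y i = _
    rw [hMapp]
    simp only [Pi.add_apply, Pi.smul_apply, smul_eq_mul]
  have hAcont : Continuous A := A.continuous_of_finiteDimensional
  set φ : (Fin 2 → ℝ) →ᵃ[ℝ] (Fin 2 → ℝ) :=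
    { toFun := fun y => A y + v₀
      linear := A
      map_vadd' := by
        intro pt vv
        show A (vv + pt) + v₀ = A vv + (A pt + v₀)
        rw [map_add]
        abel } with hφ
  have hφapp : ∀ y, φ y = A y + v₀ := fun y => rfl
  have hφcont : Continuous φ := by
    show Continuous fun y => A y + v₀
    exact hAcont.add continuous_const
  have hφ0 : φ 0 = v₀ := by rw [hφapp, map_zero, zero_add]
  have hφe₀ : φ e₀ = v₁ := by
    rw [hφapp, hAapp]
    funext i
    simp [e₀, Pi.single_apply, hu]
  have hφe₁ : φ e₁ = v₂ := by
    rw [hφapp, hAapp]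
    funext i
    simp [e₁, Pi.single_apply, hw]
  have hAinj : Function.Injective A := by
    intro x y hxy
    by_contra hne
    have hex : ∃ v ≠ 0, M.mulVec v = 0 := by
      refine ⟨x - y, sub_ne_zero.2 hne, ?_⟩
      have h : A (x - y) = 0 := by rw [map_sub, hxy, sub_self]
      rw [hA, Matrix.toLin'_apply] at h
      exact h
    exact hdet (Matrix.exists_mulVec_eq_zero_iff.1 hex)
  have hφinj : Function.Injective φ := by
    intro x y hxy
    rw [hφapp, hφapp] at hxy
    exact hAinj (by simpa using congrArg (fun z => z - v₀) hxy)
  have himg : ⇑φ '' (convexHull ℝ {(0 : Fin 2 → ℝ), e₀, e₁}) = convexHull ℝ {v₀, v₁, v₂} := by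
    rw [AffineMap.image_convexHull]
    congr 1
    rw [Set.image_insert_eq, Set.image_insert_eq, Set.image_singleton, hφ0, hφe₀, hφe₁]
  have hlamphi : ∀ y : Fin 2 → ℝ, lam (φ y) = y 0 := by
    intro y
    have h1 : lam.linear u = 1 := by
      have := lam.linearMap_vsub v₁ v₀
      simpa [hu, hlam₁, hlam₀] using this
    have h2 : lam.linear w = 0 := by
      have := lam.linearMap_vsub v₂ v₀
      simpa [hw, hlam₂, hlam₀] using this
    have hv : φ y = A y +ᵥ v₀ := rfl
    rw [hv, AffineMap.map_vadd, hAapp, map_add, LinearMap.map_smul, LinearMap.map_smul,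
      h1, h2, hlam₀]
    simp
  set subst : Fin 2 → MvPolynomial (Fin 2) ℝ :=
    fun i => MvPolynomial.C (v₀ i) + MvPolynomial.C (u i) * MvPolynomial.X 0
      + MvPolynomial.C (w i) * MvPolynomial.X 1 with hsubst
  set q : MvPolynomial (Fin 2) ℝ := MvPolynomial.eval₂ MvPolynomial.C subst p with hq
  have hqdeg : q.totalDegree ≤ k - 2 := by
    refine le_trans (tdeg_subst (fun i => ?_) p) hp
    refine le_trans (MvPolynomial.totalDegree_add _ _) (max_le ?_ ?_)
    · refine le_trans (MvPolynomial.totalDegree_add _ _) (max_le ?_ ?_)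
      · simp [MvPolynomial.totalDegree_C]
      · refine le_trans (MvPolynomial.totalDegree_mul _ _) ?_
        simp [MvPolynomial.totalDegree_C, MvPolynomial.totalDegree_X]
    · refine le_trans (MvPolynomial.totalDegree_mul _ _) ?_
      simp [MvPolynomial.totalDegree_C, MvPolynomial.totalDegree_X]
  have hqeval : ∀ y : Fin 2 → ℝ, MvPolynomial.eval y q = MvPolynomial.eval (φ y) p := by
    intro y
    rw [hq]
    show MvPolynomial.eval₂ (RingHom.id ℝ) y (MvPolynomial.eval₂ MvPolynomial.C subst p) = _
    rw [← MvPolynomial.eval₂_assoc]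
    have hfun : (fun i => MvPolynomial.eval₂ (RingHom.id ℝ) y (subst i)) = φ y := by
      funext i
      simp only [hsubst, MvPolynomial.eval₂_add, MvPolynomial.eval₂_mul, MvPolynomial.eval₂_C,
        MvPolynomial.eval₂_X, RingHom.id_apply]
      rw [hφapp, hAapp]
      simp only [Pi.add_apply, Pi.smul_apply, smul_eq_mul]
      ring
    rw [hfun]
    rfl
  -- measure part
  set S : Set (Fin 2 → ℝ) := convexHull ℝ {v₀, v₁, v₂} with hS
  set Ts : Set (Fin 2 → ℝ) := {y : Fin 2 → ℝ | 0 ≤ y 0 ∧ 0 ≤ y 1 ∧ y 0 + y 1 ≤ 1} with hTs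
  have hScompact : IsCompact S := (Set.toFinite _).isCompact_convexHull ℝ
  have hSm : MeasurableSet S := hScompact.isClosed.measurableSet
  have hTsm : MeasurableSet Ts := by
    rw [hTs, ← tset_eq]
    exact ((Set.toFinite _).isCompact_convexHull ℝ).isClosed.measurableSet
  have hpre : ⇑φ ⁻¹' S = Ts := by
    rw [← himg, Set.preimage_image_eq _ hφinj, tset_eq, hTs]
  set g : (Fin 2 → ℝ) → ℝ :=
    fun x => (legendre k).eval (1 - 2 * lam x) * MvPolynomial.eval x p with hg
  have hlamc : Continuous lam := by
    have hrepr : ⇑lam = fun x => lam.linear x + lam 0 := by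
      funext x
      conv_lhs => rw [show x = x +ᵥ (0 : Fin 2 → ℝ) from (add_zero x).symm]
      rw [AffineMap.map_vadd]
      rfl
    rw [hrepr]
    exact (lam.linear.continuous_of_finiteDimensional).add continuous_const
  have hgc : Continuous g := by
    apply Continuous.mul
    · exact (legendre k).continuous.comp (continuous_const.sub (continuous_const.mul hlamc))
    · exact MvPolynomial.continuous_eval (p := p)
  have hmap : Measure.map (⇑φ) (volume : Measure (Fin 2 → ℝ))
      = ENNReal.ofReal |(LinearMap.det A)⁻¹| • volume := by
    have hcomp : ⇑φ = (fun x => x + v₀) ∘ ⇑A := rfl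
    rw [hcomp, ← Measure.map_map (measurable_add_const v₀) hAcont.measurable,
      Real.map_linearMap_volume_pi_eq_smul_volume_pi hAdet,
      Measure.map_smul, MeasureTheory.map_add_right_eq_self]
  have hgm : AEStronglyMeasurable (Set.indicator S g) (volume : Measure (Fin 2 → ℝ)) :=
    (hgc.aestronglyMeasurable).indicator hSm
  have hmb : AEStronglyMeasurable (Set.indicator S g) (Measure.map (⇑φ) volume) := by
    rw [hmap]
    exact hgm.mono_ac Measure.smul_absolutelyContinuous
  have hchange : ∫ y, Set.indicator S g (φ y) ∂volume
      = |(LinearMap.det A)⁻¹| * ∫ x, Set.indicator S g x ∂volume := by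
    calc ∫ y, Set.indicator S g (φ y) ∂volume
        = ∫ x, Set.indicator S g x ∂(Measure.map (⇑φ) volume) :=
          (integral_map hφcont.aemeasurable hmb).symm
      _ = |(LinearMap.det A)⁻¹| * ∫ x, Set.indicator S g x ∂volume := by
          rw [hmap, integral_smul_measure, ENNReal.toReal_ofReal (abs_nonneg _), smul_eq_mul]
  have hrhs : ∫ y, Set.indicator S g (φ y) ∂volume = 0 := by
    have hptw : ∀ y, Set.indicator S g (φ y)
        = Set.indicator Ts
            (fun y => (legendre k).eval (1 - 2 * y 0) * MvPolynomial.eval y q) y := by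
      intro y
      by_cases hy : y ∈ Ts
      · have hy' : φ y ∈ S := by rw [← hpre] at hy; exact hy
        rw [Set.indicator_of_mem hy', Set.indicator_of_mem hy, hg]
        dsimp only
        rw [hlamphi, hqeval]
      · have hy' : φ y ∉ S := fun h => hy (by rw [← hpre]; exact h)
        rw [Set.indicator_of_notMem hy', Set.indicator_of_notMem hy]
    simp_rw [hptw]
    rw [integral_indicator hTsm]
    exact ref_orth hk q hqdeg
  have habs : |(LinearMap.det A)⁻¹| ≠ 0 := abs_ne_zero.2 (inv_ne_zero hAdet)
  have hzero : ∫ x, Set.indicator S g x ∂volume = 0 := by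
    have hh := hchange.symm.trans hrhs
    rcases mul_eq_zero.1 hh with h | h
    · exact absurd h habs
    · exact h
  calc ∫ x in S, g x = ∫ x, Set.indicator S g x := (integral_indicator hSm).symm
    _ = 0 := hzero
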